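/- arXiv:2001.09660 — 5 statements merged into one kernel-verified Lean document; each statement's English description precedes it below -/
import Mathlib

section
/- Let f, g : (0,∞) → ℝ be strictly increasing differentiable functions with f′ > 0 and g′ > 0 on (0,∞) such that f ∘ g⁻¹ is strictly convex on the range of g. Then for all p, q > 0, one has (f(q) − f(p))/f′(p) ≥ (g(q) − g(p))/g′(p), with equality if and only if p = q. -/
open Set Filter Topology

/-- If f, g are strictly increasing differentiable on (0,∞) with
f′ > 0, g′ > 0 and f ∘ g⁻¹ strictly convex on the range of g, then for p, q > 0,
E_f(p,q) = (f(q) − f(p))/f′(p) ≥ (g(q) − g(p))/g′(p) = E_g(p,q),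
with equality iff p = q. -/
theorem Ef_ge_Eg (f g f' g' ginv : ℝ → ℝ)
    (hf_mono : StrictMonoOn f (Ioi 0)) (hg_mono : StrictMonoOn g (Ioi 0))
    (hf' : ∀ x ∈ Ioi (0 : ℝ), HasDerivAt f (f' x) x)
    (hg' : ∀ x ∈ Ioi (0 : ℝ), HasDerivAt g (g' x) x)
    (hf'pos : ∀ x ∈ Ioi (0 : ℝ), 0 < f' x)
    (hg'pos : ∀ x ∈ Ioi (0 : ℝ), 0 < g' x)
    (hginv : ∀ x ∈ Ioi (0 : ℝ), ginv (g x) = x)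
    (hconv : StrictConvexOn ℝ (g '' Ioi 0) (f ∘ ginv))
    (p q : ℝ) (hp : 0 < p) (hq : 0 < q) :
    (g q - g p) / g' p ≤ (f q - f p) / f' p ∧
      ((f q - f p) / f' p = (g q - g p) / g' p ↔ p = q) := by
  have hφ : ∀ x ∈ Ioi (0 : ℝ), (f ∘ ginv) (g x) = f x := by
    intro x hx; simp [Function.comp, hginv x hx]
  -- limit of the slope quotient
  have hlim : ∀ a ∈ Ioi (0 : ℝ),
      Tendsto (fun x => (f x - f a) / (g x - g a)) (𝓝[≠] a) (𝓝 (f' a / g' a)) := by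
    intro a ha
    have h1 := hasDerivAt_iff_tendsto_slope.mp (hf' a ha)
    have h2 := hasDerivAt_iff_tendsto_slope.mp (hg' a ha)
    have hdiv := h1.div h2 (ne_of_gt (hg'pos a ha))
    refine hdiv.congr' ?_
    have hmem : Ioi (0 : ℝ) ∈ 𝓝[≠] a :=
      nhdsWithin_le_nhds (Ioi_mem_nhds ha)
    filter_upwards [hmem, self_mem_nhdsWithin] with x hx0 hxa
    have hxa' : x ≠ a := hxa
    have hsub : x - a ≠ 0 := sub_ne_zero.mpr hxa'
    have hg_ne : g x - g a ≠ 0 := by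
      rcases lt_or_gt_of_ne hxa' with h | h
      · exact ne_of_lt (sub_neg.mpr (hg_mono hx0 ha h))
      · exact ne_of_gt (sub_pos.mpr (hg_mono ha hx0 h))
    simp only [Pi.div_apply, slope_def_field]
    field_simp
  -- key inequality for a ≠ b
  have key : ∀ a b : ℝ, 0 < a → 0 < b → a ≠ b →
      f' a / g' a * (g b - g a) < f b - f a := by
    intro a b ha hb hab
    have hga : g a ∈ g '' Ioi 0 := mem_image_of_mem g ha
    rcases lt_or_gt_of_ne hab with hlt | hlt
    · -- a < b
      set m := (a + b) / 2 with hm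
      have ham : a < m := by simp [hm]; linarith
      have hmb : m < b := by simp [hm]; linarith
      have hm0 : 0 < m := lt_trans ha ham
      have hgam : g a < g m := hg_mono ha hm0 ham
      have hgab : g a < g b := hg_mono ha hb hlt
      have hS : (f m - f a) / (g m - g a) < (f b - f a) / (g b - g a) := by
        have := hconv.secant_strict_mono hga (mem_image_of_mem g hm0)
          (mem_image_of_mem g hb) (ne_of_gt hgam) (ne_of_gt hgab)
          (hg_mono hm0 hb hmb)
        rwa [hφ m hm0, hφ b hb, hφ a ha] at this
      have hbound : ∀ᶠ x in 𝓝[>] a,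
          (f x - f a) / (g x - g a) ≤ (f m - f a) / (g m - g a) := by
        filter_upwards [Ioo_mem_nhdsGT_of_mem ⟨le_refl a, ham⟩] with x hx
        have hx0 : 0 < x := lt_trans ha hx.1
        have hgax : g a < g x := hg_mono ha hx0 hx.1
        have := hconv.convexOn.secant_mono hga (mem_image_of_mem g hx0)
          (mem_image_of_mem g hm0) (ne_of_gt hgax) (ne_of_gt hgam)
          (le_of_lt (hg_mono hx0 hm0 hx.2))
        rwa [hφ x hx0, hφ m hm0, hφ a ha] at this
      have hlim' : Tendsto (fun x => (f x - f a) / (g x - g a)) (𝓝[>] a)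
          (𝓝 (f' a / g' a)) :=
        (hlim a ha).mono_left (nhdsWithin_mono a fun x hx => ne_of_gt hx)
      have hle : f' a / g' a ≤ (f m - f a) / (g m - g a) :=
        le_of_tendsto hlim' hbound
      have : f' a / g' a < (f b - f a) / (g b - g a) := lt_of_le_of_lt hle hS
      calc f' a / g' a * (g b - g a)
          < (f b - f a) / (g b - g a) * (g b - g a) := by
            exact mul_lt_mul_of_pos_right this (sub_pos.mpr hgab)
        _ = f b - f a := div_mul_cancel₀ _ (ne_of_gt (sub_pos.mpr hgab))
    · -- b < a
      set m := (a + b) / 2 with hm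
      have hbm : b < m := by simp [hm]; linarith
      have hma : m < a := by simp [hm]; linarith
      have hm0 : 0 < m := lt_trans hb hbm
      have hgma : g m < g a := hg_mono hm0 ha hma
      have hgba : g b < g a := hg_mono hb ha hlt
      have hS : (f b - f a) / (g b - g a) < (f m - f a) / (g m - g a) := by
        have := hconv.secant_strict_mono hga (mem_image_of_mem g hb)
          (mem_image_of_mem g hm0) (ne_of_lt hgba) (ne_of_lt hgma)
          (hg_mono hb hm0 hbm)
        rwa [hφ m hm0, hφ b hb, hφ a ha] at this
      have hbound : ∀ᶠ x in 𝓝[<] a,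
          (f m - f a) / (g m - g a) ≤ (f x - f a) / (g x - g a) := by
        filter_upwards [Ioo_mem_nhdsLT_of_mem ⟨hma, le_refl a⟩] with x hx
        have hx0 : 0 < x := lt_trans hm0 hx.1
        have hgxa : g x < g a := hg_mono hx0 ha hx.2
        have := hconv.convexOn.secant_mono hga (mem_image_of_mem g hm0)
          (mem_image_of_mem g hx0) (ne_of_lt hgma) (ne_of_lt hgxa)
          (le_of_lt (hg_mono hm0 hx0 hx.1))
        rwa [hφ x hx0, hφ m hm0, hφ a ha] at this
      have hlim' : Tendsto (fun x => (f x - f a) / (g x - g a)) (𝓝[<] a)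
          (𝓝 (f' a / g' a)) :=
        (hlim a ha).mono_left (nhdsWithin_mono a fun x hx => ne_of_lt hx)
      have hle : (f m - f a) / (g m - g a) ≤ f' a / g' a :=
        ge_of_tendsto hlim' hbound
      have hlt' : (f b - f a) / (g b - g a) < f' a / g' a := lt_of_lt_of_le hS hle
      have hneg : g b - g a < 0 := sub_neg.mpr hgba
      calc f' a / g' a * (g b - g a)
          < (f b - f a) / (g b - g a) * (g b - g a) :=
            mul_lt_mul_of_neg_right hlt' hneg
        _ = f b - f a := div_mul_cancel₀ _ (ne_of_lt hneg)
  have hf'p := hf'pos p hp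
  have hg'p := hg'pos p hp
  by_cases hpq : p = q
  · subst hpq
    simp
  · have hk := key p q hp hq hpq
    have hmain : (g q - g p) / g' p < (f q - f p) / f' p := by
      rw [div_lt_div_iff₀ hg'p hf'p]
      calc (g q - g p) * f' p = f' p / g' p * (g q - g p) * g' p := by
            field_simp
        _ < (f q - f p) * g' p :=
            mul_lt_mul_of_pos_right hk hg'p
    exact ⟨le_of_lt hmain, ⟨fun h => absurd h.symm (ne_of_lt hmain), fun h => absurd h hpq⟩⟩
end

section
/- Let f, g : (0,∞) → ℝ be continuously differentiable strictly increasing functions with f′ > 0 and g′ > 0 on (0,∞), and fix p, q > 0. Then the limit as α → 1 (with α ∈ (0,1)) of (1/(α(1−α)))·(M^f_{1−α}(p,q) − M^g_{1−α}(p,q)) exists and equals E_f(p,q) − E_g(p,q) = (f(q) − f(p))/f′(p) − (g(q) − g(p))/g′(p). -/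
open Set

private lemma inv_hasDerivAt (f f' finv : ℝ → ℝ)
    (hmono : StrictMonoOn f (Ioi 0))
    (hf' : ∀ x ∈ Ioi (0 : ℝ), HasDerivAt f (f' x) x)
    (hf'pos : ∀ x ∈ Ioi (0 : ℝ), 0 < f' x)
    (hfinv : ∀ x ∈ Ioi (0 : ℝ), finv (f x) = x)
    (p : ℝ) (hp : 0 < p) :
    HasDerivAt finv (f' p)⁻¹ (f p) := by
  -- key: for small δ, on Ioo (f (p-δ)) (f (p+δ)), finv is a right inverse landing in Icc
  have key : ∀ δ : ℝ, 0 < δ → δ < p → ∀ y ∈ Ioo (f (p - δ)) (f (p + δ)),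
      finv y ∈ Icc (p - δ) (p + δ) ∧ f (finv y) = y := by
    intro δ hδ hδp y hy
    have h1 : (0:ℝ) < p - δ := by linarith
    have hcont : ContinuousOn f (Icc (p - δ) (p + δ)) := by
      intro x hx
      have hx0 : x ∈ Ioi (0:ℝ) := lt_of_lt_of_le h1 hx.1
      exact ((hf' x hx0).continuousAt).continuousWithinAt
    have hle : p - δ ≤ p + δ := by linarith
    have := intermediate_value_Icc hle hcont
    obtain ⟨x, hx, hfx⟩ := this ⟨le_of_lt hy.1, le_of_lt hy.2⟩
    have hx0 : x ∈ Ioi (0:ℝ) := lt_of_lt_of_le h1 hx.1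
    have : finv y = x := by rw [← hfx, hfinv x hx0]
    rw [this, hfx]
    exact ⟨hx, rfl⟩
  have hmem : ∀ δ : ℝ, 0 < δ → δ < p → Ioo (f (p - δ)) (f (p + δ)) ∈ nhds (f p) := by
    intro δ hδ hδp
    have h1 : (0:ℝ) < p - δ := by linarith
    refine Ioo_mem_nhds ?_ ?_
    · exact hmono h1 hp (sub_lt_self p hδ)
    · exact hmono hp (by simp only [mem_Ioi]; linarith) (lt_add_of_pos_right p hδ)
  have hcont : ContinuousAt finv (f p) := by
    have : Filter.Tendsto finv (nhds (f p)) (nhds p) := by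
      rw [Metric.tendsto_nhds]
      intro ε hε
      set δ := min (ε/2) (p/2) with hδdef
      have hδ : 0 < δ := lt_min (by linarith) (by linarith)
      have hδp : δ < p := lt_of_le_of_lt (min_le_right _ _) (by linarith)
      filter_upwards [hmem δ hδ hδp] with y hy
      have h := (key δ hδ hδp y hy).1
      have : |finv y - p| ≤ δ := by
        rw [abs_le]; constructor <;> [linarith [h.1]; linarith [h.2]]
      have hδε : δ < ε := lt_of_le_of_lt (min_le_left _ _) (by linarith)
      calc dist (finv y) p = |finv y - p| := rfl
        _ ≤ δ := this
        _ < ε := hδε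
    have hp' : finv (f p) = p := hfinv p hp
    rw [ContinuousAt, hp']; exact this
  have hev : ∀ᶠ y in nhds (f p), f (finv y) = y := by
    have hδ : (0:ℝ) < p/2 := by linarith
    filter_upwards [hmem (p/2) hδ (by linarith)] with y hy
    exact (key (p/2) hδ (by linarith) y hy).2
  have hfp : finv (f p) = p := hfinv p hp
  have hd : HasDerivAt f (f' p) (finv (f p)) := by rw [hfp]; exact hf' p hp
  exact HasDerivAt.of_local_left_inverse hcont hd (ne_of_gt (hf'pos p hp)) hev


/-- For f, g continuously differentiable strictly increasing on (0,∞)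
with positive derivatives, and p, q > 0, the limit as α → 1 (α ∈ (0,1)) of
(1/(α(1−α)))·(M^f_{1−α}(p,q) − M^g_{1−α}(p,q)) exists and equals
E_f(p,q) − E_g(p,q).  Here M^f_{1−α}(p,q) = f⁻¹(α f(p) + (1−α) f(q)). -/
theorem qam_alpha_div_tendsto_one (f g f' g' finv ginv : ℝ → ℝ)
    (hf_mono : StrictMonoOn f (Ioi 0)) (hg_mono : StrictMonoOn g (Ioi 0))
    (hf' : ∀ x ∈ Ioi (0 : ℝ), HasDerivAt f (f' x) x)
    (hg' : ∀ x ∈ Ioi (0 : ℝ), HasDerivAt g (g' x) x)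
    (hf'cont : ContinuousOn f' (Ioi 0)) (hg'cont : ContinuousOn g' (Ioi 0))
    (hf'pos : ∀ x ∈ Ioi (0 : ℝ), 0 < f' x)
    (hg'pos : ∀ x ∈ Ioi (0 : ℝ), 0 < g' x)
    (hfinv : ∀ x ∈ Ioi (0 : ℝ), finv (f x) = x)
    (hginv : ∀ x ∈ Ioi (0 : ℝ), ginv (g x) = x)
    (p q : ℝ) (hp : 0 < p) (hq : 0 < q) :
    Filter.Tendsto
      (fun α : ℝ => (1 / (α * (1 - α))) *
        (finv (α * f p + (1 - α) * f q) - ginv (α * g p + (1 - α) * g q)))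
      (nhdsWithin 1 (Ioo (0 : ℝ) 1))
      (nhds ((f q - f p) / f' p - (g q - g p) / g' p)) := by
  set F : ℝ → ℝ := fun α => finv (α * f p + (1 - α) * f q) with hF
  set G : ℝ → ℝ := fun α => ginv (α * g p + (1 - α) * g q) with hG
  have hlin : ∀ c d : ℝ, HasDerivAt (fun α : ℝ => α * c + (1 - α) * d) (c - d) 1 := by
    intro c d
    have h := ((hasDerivAt_id (1:ℝ)).mul_const c).add
        (((hasDerivAt_const (1:ℝ) (1:ℝ)).sub (hasDerivAt_id (1:ℝ))).mul_const d)
    have e : c - d = 1 * c + (0 - 1) * d := by ring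
    rw [e]; exact h
  have hval : (1:ℝ) * f p + (1 - 1) * f q = f p := by ring
  have hvalg : (1:ℝ) * g p + (1 - 1) * g q = g p := by ring
  have hFd : HasDerivAt F ((f' p)⁻¹ * (f p - f q)) 1 := by
    have hi := inv_hasDerivAt f f' finv hf_mono hf' hf'pos hfinv p hp
    have := HasDerivAt.comp 1 (by rw [hval]; exact hi) (hlin (f p) (f q))
    simpa [hF, mul_comm, Function.comp_def] using this
  have hGd : HasDerivAt G ((g' p)⁻¹ * (g p - g q)) 1 := by
    have hi := inv_hasDerivAt g g' ginv hg_mono hg' hg'pos hginv p hp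
    have := HasDerivAt.comp 1 (by rw [hvalg]; exact hi) (hlin (g p) (g q))
    simpa [hG, mul_comm, Function.comp_def] using this
  have hFslope := hasDerivAt_iff_tendsto_slope.mp hFd
  have hGslope := hasDerivAt_iff_tendsto_slope.mp hGd
  have hsub : nhdsWithin (1:ℝ) (Ioo 0 1) ≤ nhdsWithin 1 {(1:ℝ)}ᶜ :=
    nhdsWithin_mono 1 (fun x hx => ne_of_lt hx.2)
  have hFs : Filter.Tendsto (slope F 1) (nhdsWithin 1 (Ioo (0:ℝ) 1))
      (nhds ((f' p)⁻¹ * (f p - f q))) := hFslope.mono_left hsub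
  have hGs : Filter.Tendsto (slope G 1) (nhdsWithin 1 (Ioo (0:ℝ) 1))
      (nhds ((g' p)⁻¹ * (g p - g q))) := hGslope.mono_left hsub
  have hα : Filter.Tendsto (fun α : ℝ => 1/α) (nhdsWithin 1 (Ioo (0:ℝ) 1)) (nhds 1) := by
    have : Filter.Tendsto (fun α : ℝ => 1/α) (nhds 1) (nhds (1/1)) :=
      (continuousAt_const.div continuousAt_id (by norm_num)).tendsto
    simpa using this.mono_left nhdsWithin_le_nhds
  have hmain : Filter.Tendsto (fun α : ℝ => (1/α) * (slope G 1 α - slope F 1 α))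
      (nhdsWithin 1 (Ioo (0:ℝ) 1))
      (nhds (1 * ((g' p)⁻¹ * (g p - g q) - (f' p)⁻¹ * (f p - f q)))) :=
    hα.mul (hGs.sub hFs)
  have hF1 : F 1 = p := by rw [hF]; simp only [hval]; exact hfinv p hp
  have hG1 : G 1 = p := by rw [hG]; simp only [hvalg]; exact hginv p hp
  have heq : ∀ᶠ α in nhdsWithin (1:ℝ) (Ioo 0 1),
      (1/α) * (slope G 1 α - slope F 1 α)
        = (1 / (α * (1 - α))) * (F α - G α) := by
    filter_upwards [self_mem_nhdsWithin] with α hα'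
    have hα0 : α ≠ 0 := ne_of_gt hα'.1
    have hα1 : α - 1 ≠ 0 := sub_ne_zero.mpr (ne_of_lt hα'.2)
    have h1α : (1:ℝ) - α ≠ 0 := sub_ne_zero.mpr (ne_of_gt hα'.2)
    simp only [slope_def_field, hF1, hG1]
    rw [div_sub_div_same]
    field_simp
    ring
  have hlim : (1:ℝ) * ((g' p)⁻¹ * (g p - g q) - (f' p)⁻¹ * (f p - f q))
      = (f q - f p) / f' p - (g q - g p) / g' p := by
    have hf'ne : f' p ≠ 0 := ne_of_gt (hf'pos p hp)
    have hg'ne : g' p ≠ 0 := ne_of_gt (hg'pos p hp)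
    field_simp
    ring
  rw [← hlim]
  exact hmain.congr' heq
end

section
/- Let (X, μ) be a measure space, let p, q : X → (0,∞) be measurable, and let f, g : (0,∞) → ℝ be strictly increasing differentiable functions with f′ > 0 and g′ > 0 such that f ∘ g⁻¹ is strictly convex on the range of g. Assume the function x ↦ E_f(p(x),q(x)) − E_g(p(x),q(x)) is μ-integrable. Then the quasi-arithmetic 1-divergence I₁^{f,g}[p:q] = ∫ (E_f(p,q) − E_g(p,q)) dμ satisfies I₁^{f,g}[p:q] ≥ 0, and I₁^{f,g}[p:q] = 0 if and only if p = q μ-almost everywhere. -/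
open Set MeasureTheory

open Filter Topology

lemma qam_key (f g f' g' ginv : ℝ → ℝ)
    (hf_mono : StrictMonoOn f (Ioi 0)) (hg_mono : StrictMonoOn g (Ioi 0))
    (hf' : ∀ x ∈ Ioi (0 : ℝ), HasDerivAt f (f' x) x)
    (hg' : ∀ x ∈ Ioi (0 : ℝ), HasDerivAt g (g' x) x)
    (hf'pos : ∀ x ∈ Ioi (0 : ℝ), 0 < f' x)
    (hg'pos : ∀ x ∈ Ioi (0 : ℝ), 0 < g' x)
    (hginv : ∀ x ∈ Ioi (0 : ℝ), ginv (g x) = x)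
    (hconv : StrictConvexOn ℝ (g '' Ioi 0) (f ∘ ginv))
    {a b : ℝ} (ha : 0 < a) (hb : 0 < b) (hab : a ≠ b) :
    (g b - g a) / g' a < (f b - f a) / f' a := by
  have hfa := hf'pos a ha
  have hga := hg'pos a ha
  have hmemS : ∀ t : ℝ, 0 < t → g t ∈ g '' Ioi 0 := fun t ht => ⟨t, ht, rfl⟩
  have hφ : ∀ t : ℝ, 0 < t → (f ∘ ginv) (g t) = f t := fun t ht => by
    simp [Function.comp, hginv t ht]
  -- limit of slope ratio
  have hTf := hasDerivAt_iff_tendsto_slope.mp (hf' a ha)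
  have hTg := hasDerivAt_iff_tendsto_slope.mp (hg' a ha)
  have hTdiv : Tendsto (fun t => slope f a t / slope g a t) (𝓝[≠] a) (𝓝 (f' a / g' a)) :=
    hTf.div hTg (ne_of_gt hga)
  have hgne : ∀ t : ℝ, 0 < t → t ≠ a → g t - g a ≠ 0 := by
    intro t ht htne
    rcases lt_or_gt_of_ne htne with h | h
    · exact sub_ne_zero.mpr (ne_of_lt (hg_mono ht ha h))
    · exact sub_ne_zero.mpr (ne_of_gt (hg_mono ha ht h))
  have hratio : ∀ t : ℝ, 0 < t → t ≠ a →
      slope f a t / slope g a t = (f t - f a) / (g t - g a) := by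
    intro t ht htne
    rw [slope_def_field, slope_def_field]
    exact div_div_div_cancel_right₀ (sub_ne_zero.mpr htne) _ _
  -- main inequality: f' a / g' a * (g b - g a) < f b - f a
  have hmain : f' a / g' a * (g b - g a) < f b - f a := by
    rcases lt_or_gt_of_ne hab with hlt | hgt
    · -- a < b ; t0 midpoint
      set t0 := (a + b) / 2 with ht0def
      have ht0a : a < t0 := by simp only [ht0def]; linarith
      have ht0b : t0 < b := by simp only [ht0def]; linarith
      have ht0pos : 0 < t0 := lt_trans ha ht0a
      have hgat0 : g a < g t0 := hg_mono ha ht0pos ht0a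
      have hgt0b : g t0 < g b := hg_mono ht0pos hb ht0b
      -- strict secant inequality
      have hstrict := hconv.secant_strict_mono (hmemS a ha) (hmemS t0 ht0pos) (hmemS b hb)
        (ne_of_gt hgat0) (ne_of_gt (lt_trans hgat0 hgt0b)) hgt0b
      rw [hφ a ha, hφ t0 ht0pos, hφ b hb] at hstrict
      -- limit bound: f' a / g' a ≤ (f t0 - f a)/(g t0 - g a)
      have hle : f' a / g' a ≤ (f t0 - f a) / (g t0 - g a) := by
        have hmem : Ioo a t0 ∈ 𝓝[>] a := Ioo_mem_nhdsGT_of_mem ⟨le_refl a, ht0a⟩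
        have hT' : Tendsto (fun t => (f t - f a) / (g t - g a)) (𝓝[>] a) (𝓝 (f' a / g' a)) := by
          refine (hTdiv.mono_left (nhdsWithin_mono a ?_)).congr' ?_
          · exact fun t ht => ne_of_gt ht
          · filter_upwards [hmem, self_mem_nhdsWithin] with t ht hta
            exact hratio t (lt_trans ha hta) (ne_of_gt hta)
        refine le_of_tendsto hT' ?_
        filter_upwards [hmem] with t ht
        have htpos : 0 < t := lt_trans ha ht.1
        have h1 : g a < g t := hg_mono ha htpos ht.1
        have h2 : g t < g t0 := hg_mono htpos ht0pos ht.2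
        have := hconv.convexOn.secant_mono (hmemS a ha) (hmemS t htpos) (hmemS t0 ht0pos)
          (ne_of_gt h1) (ne_of_gt hgat0) (le_of_lt h2)
        rw [hφ a ha, hφ t htpos, hφ t0 ht0pos] at this
        exact this
      have hgba : 0 < g b - g a := sub_pos.mpr (lt_trans hgat0 hgt0b)
      have h3 : (f t0 - f a) / (g t0 - g a) * (g b - g a) < f b - f a := by
        have := hstrict
        rw [div_lt_div_iff₀ (sub_pos.mpr hgat0) hgba] at this
        calc (f t0 - f a) / (g t0 - g a) * (g b - g a)
            = (f t0 - f a) * (g b - g a) / (g t0 - g a) := by ring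
          _ < f b - f a := by
              rw [div_lt_iff₀ (sub_pos.mpr hgat0)]; linarith
      calc f' a / g' a * (g b - g a) ≤ (f t0 - f a) / (g t0 - g a) * (g b - g a) :=
            mul_le_mul_of_nonneg_right hle (le_of_lt hgba)
        _ < f b - f a := h3
    · -- b < a
      set t0 := (a + b) / 2 with ht0def
      have ht0a : t0 < a := by simp only [ht0def]; linarith
      have ht0b : b < t0 := by simp only [ht0def]; linarith
      have ht0pos : 0 < t0 := lt_trans hb ht0b
      have hgbt0 : g b < g t0 := hg_mono hb ht0pos ht0b
      have hgt0a : g t0 < g a := hg_mono ht0pos ha ht0a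
      have hstrict := hconv.secant_strict_mono (hmemS a ha) (hmemS b hb) (hmemS t0 ht0pos)
        (ne_of_lt (lt_trans hgbt0 hgt0a)) (ne_of_lt hgt0a) hgbt0
      rw [hφ a ha, hφ t0 ht0pos, hφ b hb] at hstrict
      have hle : (f t0 - f a) / (g t0 - g a) ≤ f' a / g' a := by
        have hmem : Ioo t0 a ∈ 𝓝[<] a := Ioo_mem_nhdsLT_of_mem ⟨ht0a, le_refl a⟩
        have hT' : Tendsto (fun t => (f t - f a) / (g t - g a)) (𝓝[<] a) (𝓝 (f' a / g' a)) := by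
          refine (hTdiv.mono_left (nhdsWithin_mono a ?_)).congr' ?_
          · exact fun t ht => ne_of_lt ht
          · filter_upwards [hmem, self_mem_nhdsWithin] with t ht hta
            exact hratio t (lt_trans ht0pos ht.1) (ne_of_lt hta)
        refine ge_of_tendsto hT' ?_
        filter_upwards [hmem] with t ht
        have htpos : 0 < t := lt_trans ht0pos ht.1
        have h1 : g t < g a := hg_mono htpos ha ht.2
        have h2 : g t0 < g t := hg_mono ht0pos htpos ht.1
        have := hconv.convexOn.secant_mono (hmemS a ha) (hmemS t0 ht0pos) (hmemS t htpos)
          (ne_of_lt hgt0a) (ne_of_lt h1) (le_of_lt h2)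
        rw [hφ a ha, hφ t htpos, hφ t0 ht0pos] at this
        exact this
      have hgba : g b - g a < 0 := sub_neg.mpr (lt_trans hgbt0 hgt0a)
      have hFb : (f b - f a) / (g b - g a) < f' a / g' a := lt_of_lt_of_le hstrict hle
      have : f b - f a > f' a / g' a * (g b - g a) := by
        have := (div_lt_iff_of_neg hgba).mp hFb
        linarith
      linarith
  -- conclude
  rw [div_lt_div_iff₀ hga hfa]
  have := mul_lt_mul_of_pos_right hmain hga
  calc (g b - g a) * f' a = f' a / g' a * (g b - g a) * g' a := by field_simp
    _ < (f b - f a) * g' a := this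

/-- Nonnegativity and identity of indiscernibles for the
quasi-arithmetic 1-divergence I₁^{f,g}[p:q] = ∫ (E_f(p,q) − E_g(p,q)) dμ, where
E_f(a,b) = (f(b) − f(a))/f′(a), for generators f, g strictly increasing
differentiable with positive derivatives and f ∘ g⁻¹ strictly convex on the
range of g. -/
theorem qam_one_divergence_nonneg {X : Type*} [MeasurableSpace X] (μ : Measure X)
    (p q : X → ℝ) (hp : Measurable p) (hq : Measurable q)
    (hppos : ∀ x, 0 < p x) (hqpos : ∀ x, 0 < q x)
    (f g f' g' ginv : ℝ → ℝ)
    (hf_mono : StrictMonoOn f (Ioi 0)) (hg_mono : StrictMonoOn g (Ioi 0))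
    (hf' : ∀ x ∈ Ioi (0 : ℝ), HasDerivAt f (f' x) x)
    (hg' : ∀ x ∈ Ioi (0 : ℝ), HasDerivAt g (g' x) x)
    (hf'pos : ∀ x ∈ Ioi (0 : ℝ), 0 < f' x)
    (hg'pos : ∀ x ∈ Ioi (0 : ℝ), 0 < g' x)
    (hginv : ∀ x ∈ Ioi (0 : ℝ), ginv (g x) = x)
    (hconv : StrictConvexOn ℝ (g '' Ioi 0) (f ∘ ginv))
    (hint : Integrable
      (fun x => (f (q x) - f (p x)) / f' (p x) - (g (q x) - g (p x)) / g' (p x)) μ) :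
    0 ≤ ∫ x, ((f (q x) - f (p x)) / f' (p x) - (g (q x) - g (p x)) / g' (p x)) ∂μ ∧
      ((∫ x, ((f (q x) - f (p x)) / f' (p x) - (g (q x) - g (p x)) / g' (p x)) ∂μ) = 0 ↔
        p =ᵐ[μ] q) := by
  set h : X → ℝ := fun x => (f (q x) - f (p x)) / f' (p x) - (g (q x) - g (p x)) / g' (p x)
    with hhdef
  have hkey : ∀ x, (p x ≠ q x → 0 < h x) ∧ (p x = q x → h x = 0) := by
    intro x
    constructor
    · intro hne
      have := qam_key f g f' g' ginv hf_mono hg_mono hf' hg' hf'pos hg'pos hginv hconv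
        (hppos x) (hqpos x) hne
      simp only [hhdef]
      linarith
    · intro heq
      simp [hhdef, heq]
  have hnonneg : ∀ x, 0 ≤ h x := by
    intro x
    by_cases hpq : p x = q x
    · exact le_of_eq ((hkey x).2 hpq).symm
    · exact le_of_lt ((hkey x).1 hpq)
  have hiff : ∀ x, h x = 0 ↔ p x = q x := by
    intro x
    constructor
    · intro h0
      by_contra hpq
      exact absurd h0 (ne_of_gt ((hkey x).1 hpq))
    · exact (hkey x).2
  refine ⟨integral_nonneg hnonneg, ?_⟩
  rw [integral_eq_zero_iff_of_nonneg hnonneg hint]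
  constructor
  · intro hae
    filter_upwards [hae] with x hx
    exact (hiff x).mp hx
  · intro hae
    filter_upwards [hae] with x hx
    exact (hiff x).mpr hx
end

section
/- Let (X, μ) be a measure space, let p, q : X → (0,∞) be measurable, let α ∈ (0,1), and let f, g : (0,∞) → ℝ be continuous strictly increasing functions such that f ∘ g⁻¹ is strictly convex on the range of g. Assume x ↦ M^f_{1−α}(p(x),q(x)) − M^g_{1−α}(p(x),q(x)) is μ-integrable. Then the quasi-arithmetic α-divergence I_α^{f,g}[p:q] = (1/(α(1−α))) ∫ (M^f_{1−α}(p,q) − M^g_{1−α}(p,q)) dμ satisfies I_α^{f,g}[p:q] ≥ 0, with I_α^{f,g}[p:q] = 0 if and only if p = q μ-almost everywhere. -/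
open Set MeasureTheory

lemma qam_key_s6 (α : ℝ) (hα : α ∈ Ioo (0 : ℝ) 1)
    (f g finv ginv : ℝ → ℝ)
    (hf_mono : StrictMonoOn f (Ioi 0)) (hf_cont : ContinuousOn f (Ioi 0))
    (hg_mono : StrictMonoOn g (Ioi 0)) (hg_cont : ContinuousOn g (Ioi 0))
    (hfinv : ∀ x ∈ Ioi (0 : ℝ), finv (f x) = x)
    (hginv : ∀ x ∈ Ioi (0 : ℝ), ginv (g x) = x)
    (hconv : StrictConvexOn ℝ (g '' Ioi 0) (f ∘ ginv))
    (a b : ℝ) (ha : 0 < a) (hb : 0 < b) :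
    (a ≠ b → ginv (α * g a + (1 - α) * g b) < finv (α * f a + (1 - α) * f b)) ∧
    (a = b → finv (α * f a + (1 - α) * f b) = ginv (α * g a + (1 - α) * g b)) := by
  obtain ⟨hα0, hα1⟩ := hα
  have hα1' : 0 < 1 - α := by linarith
  constructor
  · intro hab
    -- convexity of g '' Ioi 0
    have hgconv : Convex ℝ (g '' Ioi 0) := by
      have := (isPreconnected_Ioi (a := (0:ℝ))).image g hg_cont
      exact this.ordConnected.convex
    have hmem : α * g a + (1 - α) * g b ∈ g '' Ioi 0 := by
      have := hgconv ⟨a, ha, rfl⟩ ⟨b, hb, rfl⟩ hα0.le hα1'.le (by ring)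
      simpa [smul_eq_mul] using this
    obtain ⟨c, hc, hgc⟩ := hmem
    -- strict convexity inequality
    have hgab : g a ≠ g b := fun h => hab (hg_mono.injOn ha hb h)
    have hstr := hconv.2 (⟨a, ha, rfl⟩ : g a ∈ g '' Ioi 0) (⟨b, hb, rfl⟩ : g b ∈ g '' Ioi 0)
      hgab hα0 hα1' (by ring)
    simp only [smul_eq_mul, Function.comp_apply, hginv a ha, hginv b hb] at hstr
    rw [← hgc, hginv c hc] at hstr
    -- hstr : f c < α * f a + (1 - α) * f b
    set t := α * f a + (1 - α) * f b with ht
    -- t ∈ f '' Ioi 0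
    have hfOC : Set.OrdConnected (f '' Ioi 0) :=
      ((isPreconnected_Ioi (a := (0:ℝ))).image f hf_cont).ordConnected
    have hmaxpos : (0:ℝ) < max a b := lt_max_of_lt_left ha
    have htle : t ≤ f (max a b) := by
      have h1 : f a ≤ f (max a b) := hf_mono.monotoneOn ha hmaxpos (le_max_left a b)
      have h2 : f b ≤ f (max a b) := hf_mono.monotoneOn hb hmaxpos (le_max_right a b)
      calc t ≤ α * f (max a b) + (1 - α) * f (max a b) := by nlinarith
        _ = f (max a b) := by ring
    have htmem : t ∈ f '' Ioi 0 :=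
      hfOC.out ⟨c, hc, rfl⟩ ⟨max a b, hmaxpos, rfl⟩ ⟨hstr.le, htle⟩
    obtain ⟨d, hd, hfd⟩ := htmem
    rw [← hgc, hginv c hc, ← hfd, hfinv d hd]
    exact (hf_mono.lt_iff_lt hc hd).mp (by rw [hfd]; exact hstr)
  · intro hab
    subst hab
    have h1 : α * f a + (1 - α) * f a = f a := by ring
    have h2 : α * g a + (1 - α) * g a = g a := by ring
    rw [h1, h2, hfinv a ha, hginv a ha]

/-- Nonnegativity and identity of indiscernibles for the
quasi-arithmetic α-divergence
I_α^{f,g}[p:q] = (1/(α(1−α))) ∫ (M^f_{1−α}(p,q) − M^g_{1−α}(p,q)) dμ,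
where M^f_{1−α}(a,b) = f⁻¹(α f(a) + (1−α) f(b)), for continuous strictly
increasing generators f, g with f ∘ g⁻¹ strictly convex on the range of g. -/
theorem qam_alpha_divergence_nonneg {X : Type*} [MeasurableSpace X] (μ : Measure X)
    (p q : X → ℝ) (hp : Measurable p) (hq : Measurable q)
    (hppos : ∀ x, 0 < p x) (hqpos : ∀ x, 0 < q x)
    (α : ℝ) (hα : α ∈ Ioo (0 : ℝ) 1)
    (f g finv ginv : ℝ → ℝ)
    (hf_mono : StrictMonoOn f (Ioi 0)) (hf_cont : ContinuousOn f (Ioi 0))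
    (hg_mono : StrictMonoOn g (Ioi 0)) (hg_cont : ContinuousOn g (Ioi 0))
    (hfinv : ∀ x ∈ Ioi (0 : ℝ), finv (f x) = x)
    (hginv : ∀ x ∈ Ioi (0 : ℝ), ginv (g x) = x)
    (hconv : StrictConvexOn ℝ (g '' Ioi 0) (f ∘ ginv))
    (hint : Integrable
      (fun x => finv (α * f (p x) + (1 - α) * f (q x)) -
        ginv (α * g (p x) + (1 - α) * g (q x))) μ) :
    0 ≤ (1 / (α * (1 - α))) *
        ∫ x, (finv (α * f (p x) + (1 - α) * f (q x)) -
          ginv (α * g (p x) + (1 - α) * g (q x))) ∂μ ∧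
      ((1 / (α * (1 - α))) *
        (∫ x, (finv (α * f (p x) + (1 - α) * f (q x)) -
          ginv (α * g (p x) + (1 - α) * g (q x))) ∂μ) = 0 ↔ p =ᵐ[μ] q) := by
  set F : X → ℝ := fun x => finv (α * f (p x) + (1 - α) * f (q x)) -
      ginv (α * g (p x) + (1 - α) * g (q x)) with hF
  have hkey : ∀ x, (p x ≠ q x → 0 < F x) ∧ (p x = q x → F x = 0) := by
    intro x
    have h := qam_key_s6 α hα f g finv ginv hf_mono hf_cont hg_mono hg_cont hfinv hginv hconv
      (p x) (q x) (hppos x) (hqpos x)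
    exact ⟨fun hne => sub_pos.mpr (h.1 hne), fun heq => sub_eq_zero.mpr ((h.2 heq).symm ▸ rfl)⟩
  have hFnonneg : ∀ x, 0 ≤ F x := by
    intro x
    rcases eq_or_ne (p x) (q x) with h | h
    · exact le_of_eq ((hkey x).2 h).symm
    · exact ((hkey x).1 h).le
  have hFiff : ∀ x, F x = 0 ↔ p x = q x := by
    intro x
    constructor
    · intro h0
      by_contra hne
      exact absurd h0 (ne_of_gt ((hkey x).1 hne))
    · exact (hkey x).2
  have hcpos : 0 < 1 / (α * (1 - α)) := by
    have h1 := hα.1; have h2 := hα.2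
    have : 0 < α * (1 - α) := by nlinarith
    positivity
  have hInonneg : 0 ≤ ∫ x, F x ∂μ := integral_nonneg hFnonneg
  refine ⟨mul_nonneg hcpos.le hInonneg, ?_⟩
  rw [mul_eq_zero]
  have hzero : (∫ x, F x ∂μ) = 0 ↔ F =ᵐ[μ] 0 :=
    integral_eq_zero_iff_of_nonneg hFnonneg hint
  constructor
  · rintro (h | h)
    · exact absurd h hcpos.ne'
    · have := hzero.mp h
      filter_upwards [this] with x hx
      exact (hFiff x).mp hx
  · intro h
    right
    rw [hzero]
    filter_upwards [h] with x hx
    exact (hFiff x).mpr hx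
end

section
/- Let f, g : (0,∞) → ℝ be differentiable strictly increasing functions with f′ > 0 and g′ > 0 such that F = f ∘ g⁻¹ is differentiable and strictly convex on the range of g. Then for all p, q > 0: E_f(p,q) − E_g(p,q) = (1/f′(p)) · B_F(g(q), g(p)), where B_F(a,b) = F(a) − F(b) − (a − b)F′(b) is the Bregman divergence of F. In particular, the quasi-arithmetic 1-divergence I₁^{f,g}[p:q] = ∫ (E_f(p,q) − E_g(p,q)) dμ equals the conformal Bregman representational divergence ∫ (1/f′(p)) B_F(g(q), g(p)) dμ. -/
open Set MeasureTheory

/-- With F = f ∘ g⁻¹ differentiable and strictly convex (derivative F′)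
on the range of g, the scalar 1-divergence is a conformal Bregman representational
divergence: E_f(p,q) − E_g(p,q) = (1/f′(p)) · B_F(g(q), g(p)), where
B_F(a,b) = F(a) − F(b) − (a−b)F′(b); consequently the integral 1-divergence equals
the integral of the conformal Bregman divergence. -/
theorem one_divergence_eq_conformal_bregman {X : Type*} [MeasurableSpace X]
    (μ : Measure X) (p q : X → ℝ) (hppos : ∀ x, 0 < p x) (hqpos : ∀ x, 0 < q x)
    (f g f' g' ginv F' : ℝ → ℝ)
    (hf_mono : StrictMonoOn f (Ioi 0)) (hg_mono : StrictMonoOn g (Ioi 0))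
    (hf' : ∀ x ∈ Ioi (0 : ℝ), HasDerivAt f (f' x) x)
    (hg' : ∀ x ∈ Ioi (0 : ℝ), HasDerivAt g (g' x) x)
    (hf'pos : ∀ x ∈ Ioi (0 : ℝ), 0 < f' x)
    (hg'pos : ∀ x ∈ Ioi (0 : ℝ), 0 < g' x)
    (hginv : ∀ x ∈ Ioi (0 : ℝ), ginv (g x) = x)
    (hF' : ∀ y ∈ g '' Ioi (0 : ℝ), HasDerivAt (f ∘ ginv) (F' y) y)
    (hconv : StrictConvexOn ℝ (g '' Ioi 0) (f ∘ ginv)) :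
    (∀ a b : ℝ, 0 < a → 0 < b →
      (f b - f a) / f' a - (g b - g a) / g' a =
        (1 / f' a) *
          ((f ∘ ginv) (g b) - (f ∘ ginv) (g a) - (g b - g a) * F' (g a))) ∧
    ∫ x, ((f (q x) - f (p x)) / f' (p x) - (g (q x) - g (p x)) / g' (p x)) ∂μ =
      ∫ x, (1 / f' (p x)) *
        ((f ∘ ginv) (g (q x)) - (f ∘ ginv) (g (p x)) -
          (g (q x) - g (p x)) * F' (g (p x))) ∂μ := by
  have key : ∀ a b : ℝ, 0 < a → 0 < b →
      (f b - f a) / f' a - (g b - g a) / g' a =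
        (1 / f' a) *
          ((f ∘ ginv) (g b) - (f ∘ ginv) (g a) - (g b - g a) * F' (g a)) := by
    intro a b ha hb
    have hchain : HasDerivAt ((f ∘ ginv) ∘ g) (F' (g a) * g' a) a :=
      (hF' (g a) ⟨a, ha, rfl⟩).comp a (hg' a ha)
    have heq : f =ᶠ[nhds a] ((f ∘ ginv) ∘ g) := by
      filter_upwards [IsOpen.mem_nhds isOpen_Ioi ha] with x hx
      simp [Function.comp, hginv x hx]
    have hfd : HasDerivAt f (F' (g a) * g' a) a := hchain.congr_of_eventuallyEq heq
    have hfa : f' a = F' (g a) * g' a := hfd.unique (hf' a ha) ▸ rfl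
    have hg'a := (hg'pos a ha).ne'
    have hga : F' (g a) = f' a / g' a := by
      rw [hfa, mul_div_assoc, div_self hg'a, mul_one]
    have h1 : (f ∘ ginv) (g b) = f b := by simp [Function.comp, hginv b hb]
    have h2 : (f ∘ ginv) (g a) = f a := by simp [Function.comp, hginv a ha]
    rw [h1, h2, hga]
    have hf'a := (hf'pos a ha).ne'
    field_simp
  refine ⟨key, ?_⟩
  apply integral_congr_ae
  filter_upwards with x
  exact key (p x) (q x) (hppos x) (hqpos x)
end
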